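/- Let d ≥ 1, γ ∈ (0,1), and let I : C^{0,γ}_b(ℝ^d) → C_b(ℝ^d) be Lipschitz with constant K₀, satisfy the global comparison property, and satisfy the locality assumption (with C^{0,γ} norms). Fix ε ∈ (0,1−γ). Then there exist a constant Λ (depending only on d, K₀, γ, ε) and a family 𝒦 of linear functionals, each based at some point x ∈ ℝ^d and of the purely integro-differential form L(u) = C·u(x) + ∫_{ℝ^d∖{x}} ( u(y) − u(x) ) dμ(y) with C ∈ ℝ, μ a nonnegative Borel measure on ℝ^d∖{x}, |C| ≤ Λ and ∫ min(1,|y−x|^γ) dμ(y) ≤ Λ (in particular, with no drift and no diffusion part), such that: (i) for all u, v ∈ C^{0,γ+ε}_b(ℝ^d) and all x ∈ ℝ^d there exists L ∈ 𝒦 based at x with I(u)(x) ≤ I(v)(x) + L(u − v); and consequently (ii) for every u ∈ C^{0,γ+ε}_b(ℝ^d) and every x ∈ ℝ^d, I(u)(x) = inf over v ∈ C^{0,γ+ε}_b(ℝ^d) of the sup over L ∈ 𝒦 based at x of ( I(v)(x) + L(u − v) ), the infimum being attained at v = u. -/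

import Mathlib

open MeasureTheory Metric Filter Set

noncomputable section

abbrev Euc (d : ℕ) := EuclideanSpace ℝ (Fin d)

variable {d : ℕ}

def supNorm (u : Euc d → ℝ) : ℝ := ⨆ x, |u x|

/-- `γ`-Hölder seminorm -/
def holderSemi (γ : ℝ) (u : Euc d → ℝ) : ℝ :=
  sInf {M : ℝ | 0 ≤ M ∧ ∀ x y, |u x - u y| ≤ M * ‖x - y‖ ^ γ}

/-- the `C^{0,γ}` norm : `sup|u| + [u]_γ` -/
def holderNorm (γ : ℝ) (u : Euc d → ℝ) : ℝ := supNorm u + holderSemi γ u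

/-- membership in `C^{0,γ}_b(ℝ^d)` : bounded `γ`-Hölder continuous functions -/
def IsHolderB (γ : ℝ) (u : Euc d → ℝ) : Prop :=
  (∃ M : ℝ, ∀ x, |u x| ≤ M) ∧ ∃ M : ℝ, ∀ x y, |u x - u y| ≤ M * ‖x - y‖ ^ γ

/-- membership in `C_b(ℝ^d)` -/
def IsCb (f : Euc d → ℝ) : Prop := Continuous f ∧ ∃ M : ℝ, ∀ x, |f x| ≤ M

def GCP (dom : (Euc d → ℝ) → Prop) (I : (Euc d → ℝ) → Euc d → ℝ) : Prop :=
  ∀ u v, dom u → dom v → (∀ y, u y ≤ v y) → ∀ x, u x = v x → I u x ≤ I v x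

def LipWith (K₀ : ℝ) (dom : (Euc d → ℝ) → Prop) (N : (Euc d → ℝ) → ℝ)
    (I : (Euc d → ℝ) → Euc d → ℝ) : Prop :=
  ∀ u v, dom u → dom v → ∀ x, |I u x - I v x| ≤ K₀ * N (fun y => u y - v y)

def localSup (r : ℝ) (u : Euc d → ℝ) : ℝ := ⨆ x ∈ closedBall (0 : Euc d) r, |u x|

/-- `γ`-Hölder seminorm restricted to the closed ball of radius `r` -/
def localHolderSemi (γ r : ℝ) (u : Euc d → ℝ) : ℝ :=
  sInf {M : ℝ | 0 ≤ M ∧ ∀ x ∈ closedBall (0 : Euc d) r, ∀ y ∈ closedBall (0 : Euc d) r,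
    |u x - u y| ≤ M * ‖x - y‖ ^ γ}

/-- the `C^{0,γ}` norm restricted to the closed ball of radius `r` -/
def localHolderNorm (γ r : ℝ) (u : Euc d → ℝ) : ℝ := localSup r u + localHolderSemi γ r u

def Locality (dom : (Euc d → ℝ) → Prop) (locN : ℝ → (Euc d → ℝ) → ℝ)
    (I : (Euc d → ℝ) → Euc d → ℝ) : Prop :=
  ∃ C₀ : ℝ, ∃ ω : ℝ → ℝ, (∀ r > (0 : ℝ), 0 < ω r) ∧ Tendsto ω atTop (nhds 0) ∧
    ∃ r₀ : ℝ, ∀ r ≥ r₀, ∀ u v, dom u → dom v → ∀ x : Euc d, ‖x‖ ≤ r →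
      |I u x - I v x| ≤ C₀ * locN (2 * r) (fun y => u y - v y)
        + C₀ * ω r * supNorm (fun y => u y - v y)

/-- the data of a purely integro-differential Lévy-type functional, based at `base` -/
structure Levy0Data (d : ℕ) where
  base : Euc d
  C : ℝ
  μ : Measure (Euc d)

/-- action of a purely integro-differential Lévy-type functional:
`C u(x) + ∫ (u(y) - u(x)) dμ(y)` -/
def Levy0Data.apply (L : Levy0Data d) (u : Euc d → ℝ) : ℝ :=
  L.C * u L.base + ∫ y, (u y - u L.base) ∂L.μ

def Levy0Bounds (Λ γ : ℝ) (L : Levy0Data d) : Prop :=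
  |L.C| ≤ Λ ∧ L.μ {L.base} = 0 ∧
    (∫⁻ y, ENNReal.ofReal (min 1 (‖y - L.base‖ ^ γ)) ∂L.μ) ≤ ENNReal.ofReal Λ

/-- min-max formula for Lipschitz operators `I : C^{0,γ}_b(ℝ^d) → C_b(ℝ^d)`
with the GCP and the locality assumption: the linear functionals are purely
integro-differential (no drift, no diffusion), and the formula holds for
`u, v ∈ C^{0,γ+ε}_b(ℝ^d)`. -/
lemma real_rpow_subadd {γ : ℝ} (hγ0 : 0 ≤ γ) (hγ1 : γ ≤ 1) {a b : ℝ} (ha : 0 ≤ a) (hb : 0 ≤ b) :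
    (a + b) ^ γ ≤ a ^ γ + b ^ γ := by
  have h := NNReal.rpow_add_le_add_rpow a.toNNReal b.toNNReal hγ0 hγ1
  have h2 := (NNReal.coe_le_coe).2 h
  simpa [← Real.toNNReal_add ha hb, NNReal.coe_rpow, Real.coe_toNNReal _ ha,
    Real.coe_toNNReal _ hb, Real.coe_toNNReal _ (add_nonneg ha hb)] using h2

lemma rpow_sub_rpow_le {γ : ℝ} (hγ0 : 0 ≤ γ) (hγ1 : γ ≤ 1) {s t : ℝ} (ht : 0 ≤ t) (hts : t ≤ s) :
    s ^ γ - t ^ γ ≤ (s - t) ^ γ := by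
  have h : s ^ γ ≤ (s - t) ^ γ + t ^ γ := by
    have := real_rpow_subadd hγ0 hγ1 (sub_nonneg.2 hts) ht
    simpa [sub_add_cancel] using this
  linarith

lemma abs_rpow_sub_rpow {γ : ℝ} (hγ0 : 0 ≤ γ) (hγ1 : γ ≤ 1) {s t : ℝ} (hs : 0 ≤ s) (ht : 0 ≤ t) :
    |s ^ γ - t ^ γ| ≤ |s - t| ^ γ := by
  rcases le_total t s with h | h
  · rw [abs_of_nonneg (sub_nonneg.2 (Real.rpow_le_rpow ht h hγ0)),
      abs_of_nonneg (sub_nonneg.2 h)]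
    exact rpow_sub_rpow_le hγ0 hγ1 ht h
  · rw [abs_sub_comm, abs_sub_comm s t,
      abs_of_nonneg (sub_nonneg.2 (Real.rpow_le_rpow hs h hγ0)),
      abs_of_nonneg (sub_nonneg.2 h)]
    exact rpow_sub_rpow_le hγ0 hγ1 hs h

lemma rho_lip {γ : ℝ} (hγ0 : 0 ≤ γ) (hγ1 : γ ≤ 1) (x a b : Euc d) :
    |min 1 (‖a - x‖ ^ γ) - min 1 (‖b - x‖ ^ γ)| ≤ ‖a - b‖ ^ γ := by
  have h1 := abs_min_sub_min_le_max (1:ℝ) (‖a - x‖ ^ γ) 1 (‖b - x‖ ^ γ)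
  have h2 : |‖a - x‖ ^ γ - ‖b - x‖ ^ γ| ≤ |‖a - x‖ - ‖b - x‖| ^ γ :=
    abs_rpow_sub_rpow hγ0 hγ1 (norm_nonneg _) (norm_nonneg _)
  have h3 : |‖a - x‖ - ‖b - x‖| ≤ ‖a - b‖ := by
    have := abs_norm_sub_norm_le (a - x) (b - x)
    simpa [sub_sub_sub_cancel_right] using this
  have h4 : |‖a - x‖ - ‖b - x‖| ^ γ ≤ ‖a - b‖ ^ γ :=
    Real.rpow_le_rpow (abs_nonneg _) h3 hγ0
  rw [sub_self, abs_zero, max_eq_right (abs_nonneg _)] at h1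
  linarith

lemma min_one_nonneg {s : ℝ} (hs : 0 ≤ s) : 0 ≤ min 1 s := le_min zero_le_one hs

/-- From a bound and a `δ`-Hölder estimate with `γ ≤ δ`, get a `min 1 ‖·‖^γ` estimate. -/
lemma min_bound {γ δ : ℝ} (hγ0 : 0 < γ) (hδ : γ ≤ δ) {u : Euc d → ℝ} {B M : ℝ}
    (hB : ∀ y, |u y| ≤ B) (hM : ∀ a b : Euc d, |u a - u b| ≤ M * ‖a - b‖ ^ δ) :
    ∃ K : ℝ, 0 ≤ K ∧ (∀ y, |u y| ≤ K) ∧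
      ∀ a b : Euc d, |u a - u b| ≤ K * min 1 (‖a - b‖ ^ γ) := by
  set B' := max B 0 with hB'
  set M' := max M 0 with hM'
  refine ⟨max M' (2 * B'), le_trans (le_max_right M 0) (le_trans ?_ (le_max_left _ _)), ?_, ?_⟩
  · exact le_rfl
  · intro y
    exact le_trans (hB y) (le_trans (le_max_left B 0) (by
      have : (0:ℝ) ≤ B' := le_max_right B 0
      calc B' ≤ 2 * B' := by linarith
        _ ≤ max M' (2 * B') := le_max_right _ _))
  · intro a b
    rcases eq_or_ne a b with rfl | hab
    · simp only [sub_self, abs_zero]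
      have h1 : 0 ≤ min 1 (‖a - a‖ ^ γ) := min_one_nonneg (Real.rpow_nonneg (norm_nonneg _) _)
      have h2 : (0:ℝ) ≤ max M' (2 * B') := le_trans (le_max_right M 0) (le_max_left _ _)
      positivity
    · have hr : 0 < ‖a - b‖ := by
        rw [norm_pos_iff]; exact sub_ne_zero.2 hab
      rcases le_total ‖a - b‖ 1 with hr1 | hr1
      · rw [min_eq_right (Real.rpow_le_one (norm_nonneg _) hr1 hγ0.le)]
        calc |u a - u b| ≤ M * ‖a - b‖ ^ δ := hM a b
          _ ≤ M' * ‖a - b‖ ^ δ :=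
            mul_le_mul_of_nonneg_right (le_max_left M 0) (Real.rpow_nonneg (norm_nonneg _) _)
          _ ≤ M' * ‖a - b‖ ^ γ := by
            refine mul_le_mul_of_nonneg_left ?_ (le_max_right M 0)
            exact Real.rpow_le_rpow_of_exponent_ge hr hr1 hδ
          _ ≤ max M' (2 * B') * ‖a - b‖ ^ γ :=
            mul_le_mul_of_nonneg_right (le_max_left _ _) (Real.rpow_nonneg (norm_nonneg _) _)
      · rw [min_eq_left (Real.one_le_rpow hr1 hγ0.le)]
        calc |u a - u b| ≤ |u a| + |u b| := abs_sub _ _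
          _ ≤ B + B := add_le_add (hB a) (hB b)
          _ ≤ B' + B' := add_le_add (le_max_left B 0) (le_max_left B 0)
          _ = 2 * B' * 1 := by ring
          _ ≤ max M' (2 * B') * 1 := by
            have := le_max_right M' (2 * B'); linarith

lemma isHolderB_of_le {γ δ : ℝ} (hγ0 : 0 < γ) (hδ : γ ≤ δ) {u : Euc d → ℝ}
    (hu : IsHolderB δ u) : IsHolderB γ u := by
  obtain ⟨⟨B, hB⟩, M, hM⟩ := hu
  obtain ⟨K, hK0, hKB, hKM⟩ := min_bound hγ0 hδ hB hM
  exact ⟨⟨K, hKB⟩, K, fun a b => (hKM a b).trans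
    (mul_le_mul_of_nonneg_left (min_le_right _ _) hK0)⟩

lemma diff_min_bound {γ δ : ℝ} (hγ0 : 0 < γ) (hδ : γ ≤ δ) {u v : Euc d → ℝ}
    (hu : IsHolderB δ u) (hv : IsHolderB δ v) :
    ∃ K : ℝ, 0 ≤ K ∧ (∀ y, |u y - v y| ≤ K) ∧
      ∀ a b : Euc d, |(u a - v a) - (u b - v b)| ≤ K * min 1 (‖a - b‖ ^ γ) := by
  obtain ⟨⟨Bu, hBu⟩, Mu, hMu⟩ := hu
  obtain ⟨⟨Bv, hBv⟩, Mv, hMv⟩ := hv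
  have hB : ∀ y, |u y - v y| ≤ Bu + Bv := fun y =>
    (abs_sub _ _).trans (add_le_add (hBu y) (hBv y))
  have hM : ∀ a b : Euc d, |(u a - v a) - (u b - v b)| ≤
      (max Mu 0 + max Mv 0) * ‖a - b‖ ^ δ := by
    intro a b
    have h0 : (u a - v a) - (u b - v b) = (u a - u b) - (v a - v b) := by ring
    have hs : (0:ℝ) ≤ ‖a - b‖ ^ δ := Real.rpow_nonneg (norm_nonneg _) _
    have h1 := hMu a b
    have h2 := hMv a b
    have h3 : Mu * ‖a - b‖ ^ δ ≤ max Mu 0 * ‖a - b‖ ^ δ :=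
      mul_le_mul_of_nonneg_right (le_max_left _ _) hs
    have h4 : Mv * ‖a - b‖ ^ δ ≤ max Mv 0 * ‖a - b‖ ^ δ :=
      mul_le_mul_of_nonneg_right (le_max_left _ _) hs
    calc |(u a - v a) - (u b - v b)| = |(u a - u b) - (v a - v b)| := by rw [h0]
      _ ≤ |u a - u b| + |v a - v b| := abs_sub _ _
      _ ≤ (max Mu 0 + max Mv 0) * ‖a - b‖ ^ δ := by linarith
  exact min_bound hγ0 hδ hB hM
theorem minmax_C0gamma (d : ℕ) (hd : 1 ≤ d) (γ : ℝ) (hγ : γ ∈ Set.Ioo (0 : ℝ) 1)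
    (K₀ : ℝ) (hK₀ : 0 ≤ K₀) (ε : ℝ) (hε : ε ∈ Set.Ioo (0 : ℝ) (1 - γ)) :
    ∃ Λ : ℝ, 0 < Λ ∧
      ∀ I : (Euc d → ℝ) → Euc d → ℝ,
        (∀ u, IsHolderB γ u → IsCb (I u)) →
        LipWith K₀ (IsHolderB γ) (holderNorm γ) I →
        GCP (IsHolderB γ) I →
        Locality (IsHolderB γ) (localHolderNorm γ) I →
        ∃ 𝒦 : Set (Levy0Data d),
          (∀ L ∈ 𝒦, Levy0Bounds Λ γ L) ∧
          (∀ u v, IsHolderB (γ + ε) u → IsHolderB (γ + ε) v → ∀ x : Euc d,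
            ∃ L ∈ 𝒦, L.base = x ∧ I u x ≤ I v x + L.apply (fun y => u y - v y)) ∧
          (∀ u, IsHolderB (γ + ε) u → ∀ x : Euc d,
            I u x = sInf {r : ℝ | ∃ v, IsHolderB (γ + ε) v ∧
                r = sSup {s : ℝ | ∃ L ∈ 𝒦, L.base = x ∧
                      s = I v x + L.apply (fun y => u y - v y)}} ∧
            sSup {s : ℝ | ∃ L ∈ 𝒦, L.base = x ∧
                s = I u x + L.apply (fun y => u y - u y)} = I u x) := by
  obtain ⟨hγ0, hγ1⟩ := hγ
  obtain ⟨hε0, hε1⟩ := hε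
  have hγε : γ ≤ γ + ε := le_add_of_nonneg_right hε0.le
  classical
  refine ⟨4 * K₀ + 1, by linarith, ?_⟩
  set Λ : ℝ := 4 * K₀ + 1 with hΛdef
  have hΛ0 : 0 < Λ := by rw [hΛdef]; linarith
  intro I hcb hLip hGCP hLoc
  set 𝒦 : Set (Levy0Data d) := {L | |L.C| ≤ Λ ∧ (L.μ = 0 ∨ ∃ z a, z ≠ L.base ∧ 0 ≤ a ∧
      a * min 1 (‖z - L.base‖ ^ γ) ≤ Λ ∧ L.μ = ENNReal.ofReal a • Measure.dirac z)} with h𝒦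
  -- the Lévy bounds hold on 𝒦
  have hbounds : ∀ L ∈ 𝒦, Levy0Bounds Λ γ L := by
    rintro L ⟨hC, hμ⟩
    refine ⟨hC, ?_, ?_⟩
    · rcases hμ with h0 | ⟨z, a, hz, ha, hb, hform⟩
      · simp [h0]
      · rw [hform]
        simp [Measure.smul_apply, Measure.dirac_apply, hz]
    · rcases hμ with h0 | ⟨z, a, hz, ha, hb, hform⟩
      · simp [h0]
      · rw [hform, lintegral_smul_measure, lintegral_dirac, smul_eq_mul, ← ENNReal.ofReal_mul ha]
        exact ENNReal.ofReal_le_ofReal hb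
  have hmem0 : ∀ x : Euc d, (⟨x, 0, 0⟩ : Levy0Data d) ∈ 𝒦 := by
    intro x
    exact ⟨by simpa using hΛ0.le, Or.inl rfl⟩
  have happly0 : ∀ (L : Levy0Data d) (f : Euc d → ℝ),
      L.apply (fun y => f y - f y) = 0 := by
    intro L f
    simp [Levy0Data.apply]
  -- the key inequality
  have key : ∀ u v, IsHolderB (γ + ε) u → IsHolderB (γ + ε) v → ∀ x : Euc d,
      ∃ L ∈ 𝒦, L.base = x ∧ I u x ≤ I v x + L.apply (fun y => u y - v y) := by
    intro u v hu hv x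
    have hdomu : IsHolderB γ u := isHolderB_of_le hγ0 hγε hu
    have hdomv : IsHolderB γ v := isHolderB_of_le hγ0 hγε hv
    obtain ⟨Kw, hKw0, hKwB, hKwM⟩ := diff_min_bound hγ0 hγε hu hv
    set w : Euc d → ℝ := fun y => u y - v y with hwdef
    set ρ : Euc d → ℝ := fun y => min 1 (‖y - x‖ ^ γ) with hρdef
    have hρ0 : ∀ y, 0 ≤ ρ y := fun y =>
      min_one_nonneg (Real.rpow_nonneg (norm_nonneg _) _)
    have hρ1 : ∀ y, ρ y ≤ 1 := fun y => min_le_left _ _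
    have hρx : ρ x = 0 := by
      simp [hρdef, Real.zero_rpow hγ0.ne']
    have hρpos : ∀ y : Euc d, y ≠ x → 0 < ρ y := by
      intro y hy
      have : (0:ℝ) < ‖y - x‖ := by rw [norm_pos_iff]; exact sub_ne_zero.2 hy
      exact lt_min one_pos (Real.rpow_pos_of_pos this _)
    set A : Set ℝ := {t | ∃ y : Euc d, y ≠ x ∧ t = (w y - w x) / ρ y} with hA
    have hbddA : BddAbove (insert (0:ℝ) A) := by
      refine ⟨Kw, ?_⟩
      rintro t (rfl | ⟨y, hy, rfl⟩)
      · exact hKw0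
      · rw [div_le_iff₀ (hρpos y hy)]
        exact le_trans (le_abs_self _) (hKwM y x)
    set q : ℝ := sSup (insert 0 A) with hq
    have hq0 : 0 ≤ q := le_csSup hbddA (mem_insert _ _)
    have hqb : ∀ y, w y - w x ≤ q * ρ y := by
      intro y
      rcases eq_or_ne y x with rfl | hy
      · simp [hρx]
      · have hρy := hρpos y hy
        have ht : (w y - w x) / ρ y ≤ q :=
          le_csSup hbddA (mem_insert_of_mem _ ⟨y, hy, rfl⟩)
        calc w y - w x = (w y - w x) / ρ y * ρ y := (div_mul_cancel₀ _ hρy.ne').symm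
          _ ≤ q * ρ y := mul_le_mul_of_nonneg_right ht hρy.le
    set φ : Euc d → ℝ := fun y => v y + (w x + q * ρ y) with hφdef
    have hdomφ : IsHolderB γ φ := by
      obtain ⟨⟨Kv', hKv'B⟩, Kv, hKv⟩ := hdomv
      refine ⟨⟨Kv' + (|w x| + q), fun y => ?_⟩, ⟨max Kv 0 + q, fun a b => ?_⟩⟩
      · have h1 := abs_add_le (v y) (w x + q * ρ y)
        have h1' := abs_add_le (w x) (q * ρ y)
        have h2 : |q * ρ y| ≤ q := by
          rw [abs_of_nonneg (mul_nonneg hq0 (hρ0 y))]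
          nlinarith [hρ1 y, hρ0 y]
        have := hKv'B y
        calc |φ y| = |v y + (w x + q * ρ y)| := rfl
          _ ≤ Kv' + (|w x| + q) := by linarith
      · have h1 : |φ a - φ b| ≤ |v a - v b| + q * |ρ a - ρ b| := by
          have he : φ a - φ b = (v a - v b) + q * (ρ a - ρ b) := by
            simp only [hφdef]; ring
          rw [he]
          refine (abs_add_le _ _).trans ?_
          rw [abs_mul, abs_of_nonneg hq0]
        have h2 : |ρ a - ρ b| ≤ ‖a - b‖ ^ γ := rho_lip hγ0.le hγ1.le x a b
        have h3 := hKv a b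
        have hs : (0:ℝ) ≤ ‖a - b‖ ^ γ := Real.rpow_nonneg (norm_nonneg _) _
        have h4 : Kv * ‖a - b‖ ^ γ ≤ max Kv 0 * ‖a - b‖ ^ γ :=
          mul_le_mul_of_nonneg_right (le_max_left _ _) hs
        have h5 : q * |ρ a - ρ b| ≤ q * ‖a - b‖ ^ γ :=
          mul_le_mul_of_nonneg_left h2 hq0
        calc |φ a - φ b| ≤ |v a - v b| + q * |ρ a - ρ b| := h1
          _ ≤ (max Kv 0 + q) * ‖a - b‖ ^ γ := by linarith
    have hcomp : ∀ y, u y ≤ φ y := by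
      intro y
      have h := hqb y
      simp only [hwdef] at h
      simp only [hφdef, hwdef]
      linarith
    have heq : u x = φ x := by
      simp only [hφdef, hwdef, hρx, mul_zero, add_zero]
      ring
    have h1 : I u x ≤ I φ x := hGCP u φ hdomu hdomφ hcomp x heq
    have h2 : |I φ x - I v x| ≤ K₀ * holderNorm γ (fun y => φ y - v y) :=
      hLip φ v hdomφ hdomv x
    have hHn : holderNorm γ (fun y => φ y - v y) ≤ |w x| + 2 * q := by
      have hfun : (fun y => φ y - v y) = fun y => w x + q * ρ y := by
        funext y; simp only [hφdef]; ring
      rw [hfun, holderNorm]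
      have hsup : supNorm (fun y => w x + q * ρ y) ≤ |w x| + q := by
        refine ciSup_le fun y => ?_
        have h1' := abs_add_le (w x) (q * ρ y)
        have h2' : |q * ρ y| ≤ q := by
          rw [abs_of_nonneg (mul_nonneg hq0 (hρ0 y))]
          nlinarith [hρ1 y, hρ0 y]
        linarith
      have hsemi : holderSemi γ (fun y => w x + q * ρ y) ≤ q := by
        refine csInf_le ⟨0, fun M hM => hM.1⟩ ⟨hq0, fun a b => ?_⟩
        have he : (w x + q * ρ a) - (w x + q * ρ b) = q * (ρ a - ρ b) := by ring
        rw [he, abs_mul, abs_of_nonneg hq0]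
        exact mul_le_mul_of_nonneg_left (rho_lip hγ0.le hγ1.le x a b) hq0
      linarith
    have hmain : I u x ≤ I v x + K₀ * |w x| + 2 * (K₀ * q) := by
      have h2' := (abs_le.1 h2).2
      have h3 : K₀ * holderNorm γ (fun y => φ y - v y) ≤ K₀ * (|w x| + 2 * q) :=
        mul_le_mul_of_nonneg_left hHn hK₀
      have h4 : K₀ * (|w x| + 2 * q) = K₀ * |w x| + 2 * (K₀ * q) := by ring
      linarith
    set C : ℝ := if 0 ≤ w x then K₀ else -K₀ with hC
    have hCw : C * w x = K₀ * |w x| := by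
      rw [hC]
      split_ifs with h
      · rw [abs_of_nonneg h]
      · rw [abs_of_neg (lt_of_not_ge h)]; ring
    have hCabs : |C| ≤ Λ := by
      rw [hC]
      split_ifs with h
      · rw [abs_of_nonneg hK₀, hΛdef]; linarith
      · rw [abs_neg, abs_of_nonneg hK₀, hΛdef]; linarith
    rcases hq0.eq_or_lt with hq0' | hqpos
    · refine ⟨⟨x, C, 0⟩, ⟨hCabs, Or.inl rfl⟩, rfl, ?_⟩
      have happ : Levy0Data.apply ⟨x, C, 0⟩ w = C * w x := by
        simp [Levy0Data.apply]
      rw [happ, hCw]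
      have hqz : K₀ * q = 0 := by rw [← hq0']; ring
      linarith [hmain]
    · obtain ⟨t, ht_mem, htq⟩ :=
        exists_lt_of_lt_csSup (Set.insert_nonempty 0 A) (by linarith : q / 2 < q)
      rcases ht_mem with rfl | ⟨z, hzx, rfl⟩
      · exact absurd htq (by linarith)
      · have hρz := hρpos z hzx
        have hwz : q / 2 * ρ z ≤ w z - w x := ((lt_div_iff₀ hρz).1 htq).le
        obtain ⟨a, ha0, haρ⟩ : ∃ a : ℝ, 0 ≤ a ∧ a * ρ z = 4 * K₀ :=
          ⟨4 * K₀ / ρ z, div_nonneg (by linarith) hρz.le, div_mul_cancel₀ _ hρz.ne'⟩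
        refine ⟨⟨x, C, ENNReal.ofReal a • Measure.dirac z⟩,
          ⟨hCabs, Or.inr ⟨z, a, hzx, ha0, ?_, rfl⟩⟩, rfl, ?_⟩
        · have h5 : a * min 1 (‖z - x‖ ^ γ) = 4 * K₀ := haρ
          rw [h5, hΛdef]; linarith
        · have happ : Levy0Data.apply ⟨x, C, ENNReal.ofReal a • Measure.dirac z⟩ w
              = C * w x + a * (w z - w x) := by
            simp only [Levy0Data.apply]
            rw [integral_smul_measure, integral_dirac, ENNReal.toReal_ofReal ha0,
              smul_eq_mul]
          rw [happ, hCw]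
          have h7 : a * (q / 2 * ρ z) ≤ a * (w z - w x) :=
            mul_le_mul_of_nonneg_left hwz ha0
          have h8 : a * (q / 2 * ρ z) = 2 * (K₀ * q) := by
            rw [show a * (q / 2 * ρ z) = a * ρ z * (q / 2) by ring, haρ]; ring
          have h6 : 2 * (K₀ * q) ≤ a * (w z - w x) :=
            calc 2 * (K₀ * q) = a * (q / 2 * ρ z) := h8.symm
              _ ≤ a * (w z - w x) := h7
          linarith [hmain]
  refine ⟨𝒦, hbounds, key, ?_⟩
  intro u hu x
  have hset : {s : ℝ | ∃ L ∈ 𝒦, L.base = x ∧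
      s = I u x + L.apply (fun y => u y - u y)} = {I u x} := by
    ext s
    simp only [mem_setOf_eq, mem_singleton_iff]
    constructor
    · rintro ⟨L, hL, hbase, rfl⟩
      rw [happly0]; ring
    · rintro rfl
      exact ⟨⟨x, 0, 0⟩, hmem0 x, rfl, by rw [happly0]; ring⟩
  have hbddS : ∀ v, IsHolderB (γ + ε) v → BddAbove {s : ℝ | ∃ L ∈ 𝒦, L.base = x ∧
      s = I v x + L.apply (fun y => u y - v y)} := by
    intro v hv
    obtain ⟨Kw, hKw0, hKwB, hKwM⟩ := diff_min_bound hγ0 hγε hu hv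
    refine ⟨I v x + (Λ * |u x - v x| + Kw * Λ), ?_⟩
    rintro s ⟨L, ⟨hC, hμ⟩, hbase, rfl⟩
    subst hbase
    have h1 : L.C * (u L.base - v L.base) ≤ Λ * |u L.base - v L.base| :=
      calc L.C * (u L.base - v L.base) ≤ |L.C * (u L.base - v L.base)| := le_abs_self _
        _ = |L.C| * |u L.base - v L.base| := abs_mul _ _
        _ ≤ Λ * |u L.base - v L.base| := mul_le_mul_of_nonneg_right hC (abs_nonneg _)
    have h2 : (∫ y, ((u y - v y) - (u L.base - v L.base)) ∂L.μ) ≤ Kw * Λ := by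
      rcases hμ with h0 | ⟨z, a, hz, ha, hb, hform⟩
      · rw [h0]
        simp only [integral_zero_measure]
        positivity
      · rw [hform, integral_smul_measure, integral_dirac, ENNReal.toReal_ofReal ha,
          smul_eq_mul]
        have h3 : (u z - v z) - (u L.base - v L.base) ≤ Kw * min 1 (‖z - L.base‖ ^ γ) :=
          le_trans (le_abs_self _) (hKwM z L.base)
        calc a * ((u z - v z) - (u L.base - v L.base))
            ≤ a * (Kw * min 1 (‖z - L.base‖ ^ γ)) := mul_le_mul_of_nonneg_left h3 ha
          _ = Kw * (a * min 1 (‖z - L.base‖ ^ γ)) := by ring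
          _ ≤ Kw * Λ := mul_le_mul_of_nonneg_left hb hKw0
    simp only [Levy0Data.apply]
    linarith
  have hIle : ∀ v, IsHolderB (γ + ε) v → I u x ≤ sSup {s : ℝ | ∃ L ∈ 𝒦, L.base = x ∧
      s = I v x + L.apply (fun y => u y - v y)} := by
    intro v hv
    obtain ⟨L, hL, hbase, hle⟩ := key u v hu hv x
    exact le_trans hle (le_csSup (hbddS v hv) ⟨L, hL, hbase, rfl⟩)
  constructor
  · have hmemR : I u x ∈ {r : ℝ | ∃ v, IsHolderB (γ + ε) v ∧
        r = sSup {s : ℝ | ∃ L ∈ 𝒦, L.base = x ∧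
          s = I v x + L.apply (fun y => u y - v y)}} :=
      ⟨u, hu, by rw [hset, csSup_singleton]⟩
    apply le_antisymm
    · refine le_csInf ⟨_, hmemR⟩ ?_
      rintro r ⟨v, hv, rfl⟩
      exact hIle v hv
    · refine csInf_le ⟨I u x, ?_⟩ hmemR
      rintro r ⟨v, hv, rfl⟩
      exact hIle v hv
  · rw [hset]
    exact csSup_singleton _


end
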